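/- Let f ∈ ℤ[x] be a square-free polynomial of degree d = 2(2k + 1) with k ≥ 0, such that f(t) > 0 for all t ∈ ℝ, and assume the constant coefficient f(0) IS of the form 2^{2a}·(8b + 1) for some nonnegative integers a, b. Then there exists ℓ₀ ∈ ℕ such that for every ℓ ≥ ℓ₀ the polynomial f(x) − 2^{−2ℓ}·(x² + x + 1)^{2k}·x² is NOT a sum of four squares in ℚ[x]. -/

import Mathlib

open Polynomial

private lemma zmod8_aux : ∀ b c d : ZMod (2^3), 1 + b^2 + c^2 + d^2 ≠ 0 := by decide

private lemma padic_dvd_norm_le {n : ℕ} {x : ℤ_[2]} (h : (2:ℤ_[2])^n ∣ x) :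
    ‖x‖ ≤ (2:ℝ)^(-(n:ℤ)) := by
  have := (PadicInt.norm_le_pow_iff_mem_span_pow x n).mpr
    (by rw [Ideal.mem_span_singleton]; exact_mod_cast h)
  simpa using this

private lemma q2_core {x y z w : ℚ_[2]} (hx : x ≠ 0) (hy : ‖y‖ ≤ ‖x‖) (hz : ‖z‖ ≤ ‖x‖)
    (hw : ‖w‖ ≤ ‖x‖) (h : x^2 + y^2 + z^2 + w^2 = 0) : False := by
  have hxpos : 0 < ‖x‖ := norm_pos_iff.mpr hx
  have hb : ‖y/x‖ ≤ 1 := by rw [norm_div]; exact div_le_one_of_le₀ hy (le_of_lt hxpos)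
  have hcn : ‖z/x‖ ≤ 1 := by rw [norm_div]; exact div_le_one_of_le₀ hz (le_of_lt hxpos)
  have hd : ‖w/x‖ ≤ 1 := by rw [norm_div]; exact div_le_one_of_le₀ hw (le_of_lt hxpos)
  set B : ℤ_[2] := ⟨y/x, hb⟩
  set C : ℤ_[2] := ⟨z/x, hcn⟩
  set D : ℤ_[2] := ⟨w/x, hd⟩
  have key : (1 + B^2 + C^2 + D^2 : ℤ_[2]) = 0 := by
    apply Subtype.ext
    push_cast [PadicInt.coe_add, PadicInt.coe_pow, PadicInt.coe_one, PadicInt.coe_zero]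
    show 1 + (y/x)^2 + (z/x)^2 + (w/x)^2 = 0
    field_simp
    linear_combination h
  have := congrArg (PadicInt.toZModPow 3) key
  simp only [map_add, map_pow, map_one, map_zero] at this
  exact zmod8_aux _ _ _ this

private lemma q2_aniso_max {x y z w : ℚ_[2]} (h : x^2 + y^2 + z^2 + w^2 = 0)
    (hy : ‖y‖ ≤ ‖x‖) (hz : ‖z‖ ≤ ‖x‖) (hw : ‖w‖ ≤ ‖x‖) :
    x = 0 ∧ y = 0 ∧ z = 0 ∧ w = 0 := by
  have hx : x = 0 := by
    by_contra hx
    exact q2_core hx hy hz hw h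
  subst hx
  simp only [norm_zero] at hy hz hw
  exact ⟨rfl, norm_le_zero_iff.mp hy, norm_le_zero_iff.mp hz, norm_le_zero_iff.mp hw⟩

private lemma q2_aniso {x y z w : ℚ_[2]} (h : x^2 + y^2 + z^2 + w^2 = 0) :
    x = 0 ∧ y = 0 ∧ z = 0 ∧ w = 0 := by
  rcases le_total (max ‖x‖ ‖y‖) (max ‖z‖ ‖w‖) with hA | hA
  · rcases le_total ‖z‖ ‖w‖ with hB | hB
    · -- max is w
      have e1 : ‖x‖ ≤ ‖w‖ := le_trans ((le_max_left _ _).trans hA) (by simp [max_eq_right hB])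
      have e2 : ‖y‖ ≤ ‖w‖ := le_trans ((le_max_right _ _).trans hA) (by simp [max_eq_right hB])
      obtain ⟨a1, a2, a3, a4⟩ := q2_aniso_max (x := w) (y := x) (z := y) (w := z)
        (by linear_combination h) e1 e2 hB
      exact ⟨a2, a3, a4, a1⟩
    · -- max is z
      have e1 : ‖x‖ ≤ ‖z‖ := le_trans ((le_max_left _ _).trans hA) (by simp [max_eq_left hB])
      have e2 : ‖y‖ ≤ ‖z‖ := le_trans ((le_max_right _ _).trans hA) (by simp [max_eq_left hB])
      obtain ⟨a1, a2, a3, a4⟩ := q2_aniso_max (x := z) (y := x) (z := y) (w := w)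
        (by linear_combination h) e1 e2 hB
      exact ⟨a2, a3, a1, a4⟩
  · rcases le_total ‖x‖ ‖y‖ with hB | hB
    · -- max is y
      have e1 : ‖z‖ ≤ ‖y‖ := le_trans ((le_max_left _ _).trans hA) (by simp [max_eq_right hB])
      have e2 : ‖w‖ ≤ ‖y‖ := le_trans ((le_max_right _ _).trans hA) (by simp [max_eq_right hB])
      obtain ⟨a1, a2, a3, a4⟩ := q2_aniso_max (x := y) (y := x) (z := z) (w := w)
        (by linear_combination h) hB e1 e2
      exact ⟨a2, a1, a3, a4⟩
    · -- max is x
      have e1 : ‖z‖ ≤ ‖x‖ := le_trans ((le_max_left _ _).trans hA) (by simp [max_eq_left hB])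
      have e2 : ‖w‖ ≤ ‖x‖ := le_trans ((le_max_right _ _).trans hA) (by simp [max_eq_left hB])
      exact q2_aniso_max h hB e1 e2

private lemma norm_two_z2 : ‖(2:ℤ_[2])‖ = 2⁻¹ := by
  have := PadicInt.norm_p (p := 2)
  simpa using this

private lemma sqrt_lemma (b : ℕ) : ∃ u : ℤ_[2],
    u^2 = ((8*(b:ℤ)+1 : ℤ) : ℤ_[2]) ∧ ‖u - 1‖ < 2⁻¹ ∧ ‖u‖ = 1 := by
  set s : ℤ := 8*(b:ℤ)+1 with hs
  set F₀ : Polynomial ℤ_[2] := X^2 - C ((s:ℤ_[2])) with hF₀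
  have hder : F₀.derivative = C 2 * X := by
    simp [hF₀, derivative_sub, derivative_pow]
  have hd1 : F₀.derivative.eval 1 = 2 := by simp [hder]
  have hnd : ‖F₀.derivative.eval 1‖ = 2⁻¹ := by rw [hd1, norm_two_z2]
  have he1 : F₀.eval 1 = -(((8*(b:ℤ) : ℤ)) : ℤ_[2]) := by
    simp [hF₀, hs]
  have hdvd : (2:ℤ_[2])^3 ∣ F₀.eval 1 := by
    rw [he1]
    exact dvd_neg.mpr ⟨(b:ℤ_[2]), by push_cast; ring⟩
  have hnorm : ‖F₀.eval 1‖ < ‖F₀.derivative.eval 1‖^2 := by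
    calc ‖F₀.eval 1‖ ≤ (2:ℝ)^(-(3:ℕ):ℤ) := padic_dvd_norm_le hdvd
    _ < (2⁻¹)^2 := by norm_num
    _ = ‖F₀.derivative.eval 1‖^2 := by rw [hnd]
  obtain ⟨u, hu0, hu1, hu2, -⟩ := hensels_lemma hnorm
  simp only [Polynomial.coe_aeval_eq_eval] at hu0 hu1 hu2
  refine ⟨u, ?_, ?_, ?_⟩
  · have : u^2 - (s:ℤ_[2]) = 0 := by simpa [hF₀] using hu0
    linear_combination this
  · rwa [hnd] at hu1
  · have h1 : u = 1 + (u - 1) := by ring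
    rw [h1, PadicInt.norm_add_eq_max_of_ne]
    · rw [norm_one]
      rw [hnd] at hu1
      rw [max_eq_left (le_of_lt (lt_of_lt_of_le hu1 (by norm_num)))]
    · rw [norm_one]
      rw [hnd] at hu1
      intro hcon
      rw [← hcon] at hu1
      norm_num at hu1

private lemma hensel_root (f : Polynomial ℤ) (a b k ℓ : ℕ) (hℓ : a + 3 ≤ ℓ)
    (hc : f.coeff 0 = 2^(2*a) * (8*(b:ℤ)+1)) :
    ∃ α : ℚ_[2],
      ((f.map (Int.castRingHom ℚ) - C ((1:ℚ)/2^(2*ℓ)) * ((X^2+X+1)^(2*k) * X^2)).map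
        (Rat.castHom ℚ_[2])).eval α = 0 ∧
      (((f.map (Int.castRingHom ℚ) - C ((1:ℚ)/2^(2*ℓ)) * ((X^2+X+1)^(2*k) * X^2)).map
        (Rat.castHom ℚ_[2]))).derivative.eval α ≠ 0 := by
  obtain ⟨u, hu2, hu1, hunorm⟩ := sqrt_lemma b
  set s : ℤ := 8*(b:ℤ)+1 with hs
  set m := ℓ + a with hm
  set d := f.natDegree with hd
  set e : ℕ → ℤ_[2] := fun j => if j = 0 then ((s:ℤ_[2]))
      else ((f.coeff j : ℤ_[2]) * 2^(m*j - 2*a)) with he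
  have he0 : e 0 = (s:ℤ_[2]) := by simp [he]
  have heS : ∀ j : ℕ, e (j+1) = (f.coeff (j+1) : ℤ_[2]) * 2^(m*(j+1) - 2*a) := by
    intro j; simp [he]
  set F : Polynomial ℤ_[2] := (∑ j ∈ Finset.range (d+1), C (e j) * X^j) -
      X^2 * (C ((2:ℤ_[2])^(2*m)) * X^2 + C ((2:ℤ_[2])^m) * X + 1)^(2*k) with hF
  have hQdvd : (2:ℤ_[2])^m ∣ ((2^(2*m)*u^2 + 2^m*u + 1)^(2*k) - 1) := by
    have h1 : (2:ℤ_[2])^m ∣ (2^(2*m)*u^2 + 2^m*u) := ⟨2^m*u^2+u, by ring⟩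
    have h2 := sub_dvd_pow_sub_pow (2^(2*m)*u^2 + 2^m*u + 1) 1 (2*k)
    rw [one_pow, add_sub_cancel_right] at h2
    exact dvd_trans h1 h2
  have hFeval : F.eval u = ((∑ j ∈ Finset.range (d+1), e j * u^j) - (s:ℤ_[2]))
      - (s:ℤ_[2]) * ((2^(2*m)*u^2 + 2^m*u + 1)^(2*k) - 1) := by
    simp only [hF, eval_sub, eval_finset_sum, eval_mul, eval_pow, eval_add, eval_C, eval_X,
      eval_one]
    linear_combination (-((2^(2*m)*u^2 + 2^m*u + 1)^(2*k))) * hu2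
  have hE : (2:ℤ_[2])^(ℓ-a) ∣ ((∑ j ∈ Finset.range (d+1), e j * u^j) - (s:ℤ_[2])) := by
    rw [Finset.sum_range_succ', he0]
    simp only [pow_zero, mul_one, add_sub_cancel_right]
    refine Finset.dvd_sum ?_
    intro i _
    rw [heS i]
    refine ((pow_dvd_pow 2 ?_).mul_left _).mul_right _
    have hmm : m ≤ m*(i+1) := Nat.le_mul_of_pos_right m (Nat.succ_pos i)
    omega
  have hdvd1 : (2:ℤ_[2])^(ℓ-a) ∣ F.eval u := by
    rw [hFeval]
    exact dvd_sub hE (((pow_dvd_pow 2 (by omega : ℓ - a ≤ m)).trans hQdvd).mul_left _)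
  have hder_eval : F.derivative.eval u = -(2*u) +
      ((∑ j ∈ Finset.range (d+1), e j * ((j:ℤ_[2]) * u^(j-1)))
        - 2*u*((2^(2*m)*u^2 + 2^m*u + 1)^(2*k) - 1)
        - u^2 * (((2*k : ℕ):ℤ_[2]) * (2^(2*m)*u^2 + 2^m*u + 1)^(2*k-1)
            * (2^(2*m)*(2*u) + 2^m))) := by
    simp only [hF, derivative_sub, derivative_sum, derivative_C_mul_X_pow, derivative_mul,
      derivative_pow, derivative_add, derivative_C, derivative_X, derivative_X_pow,
      eval_sub, eval_finset_sum, eval_mul, eval_pow, eval_add, eval_C, eval_X, eval_one,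
      eval_zero, derivative_one, mul_one, zero_mul, zero_add, add_zero, mul_zero]
    push_cast
    ring
  set D : ℤ_[2] := ((∑ j ∈ Finset.range (d+1), e j * ((j:ℤ_[2]) * u^(j-1)))
        - 2*u*((2^(2*m)*u^2 + 2^m*u + 1)^(2*k) - 1)
        - u^2 * (((2*k : ℕ):ℤ_[2]) * (2^(2*m)*u^2 + 2^m*u + 1)^(2*k-1)
            * (2^(2*m)*(2*u) + 2^m))) with hDdef
  have hDdvd : (2:ℤ_[2])^2 ∣ D := by
    rw [hDdef]
    refine dvd_sub (dvd_sub ?_ ?_) ?_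
    · refine Finset.dvd_sum ?_
      intro i _
      rcases i with _ | n
      · simp
      · rw [heS n]
        refine (((pow_dvd_pow 2 ?_).mul_left _).mul_right _)
        have hmm : m ≤ m*(n+1) := Nat.le_mul_of_pos_right m (Nat.succ_pos n)
        omega
    · exact (((pow_dvd_pow 2 (by omega : 2 ≤ m)).trans hQdvd).mul_left _)
    · refine Dvd.dvd.mul_left ?_ _
      refine Dvd.dvd.mul_left ?_ _
      refine dvd_add ?_ (pow_dvd_pow 2 (by omega))
      exact ((pow_dvd_pow 2 (by omega : 2 ≤ 2*m)).mul_right _)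
  have hnD : ‖D‖ ≤ (2:ℝ)^(-((2:ℕ):ℤ)) := padic_dvd_norm_le hDdvd
  have hnD' : ‖D‖ < 2⁻¹ := lt_of_le_of_lt hnD (by norm_num)
  have h2u : ‖-(2*u)‖ = 2⁻¹ := by rw [norm_neg, norm_mul, norm_two_z2, hunorm, mul_one]
  have hder : ‖F.derivative.eval u‖ = 2⁻¹ := by
    rw [hder_eval, PadicInt.norm_add_eq_max_of_ne, h2u]
    · rw [max_eq_left (le_of_lt hnD')]
    · rw [h2u]
      intro hcon
      rw [← hcon] at hnD'
      norm_num at hnD'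
  have hHensel : ‖F.eval u‖ < ‖F.derivative.eval u‖^2 := by
    rw [hder]
    calc ‖F.eval u‖ ≤ (2:ℝ)^(-((ℓ-a : ℕ):ℤ)) := padic_dvd_norm_le hdvd1
      _ ≤ (2:ℝ)^(-(3:ℤ)) := by
          apply zpow_le_zpow_right₀ one_le_two
          omega
      _ < (2⁻¹)^2 := by norm_num
  obtain ⟨z, hz0, -, hz2, -⟩ := hensels_lemma hHensel
  simp only [Polynomial.coe_aeval_eq_eval] at hz0 hz2
  have hz3 : F.derivative.eval z ≠ 0 := by
    intro h0
    rw [h0, norm_zero, hder] at hz2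
    norm_num at hz2
  set G : Polynomial ℚ_[2] := (f.map (Int.castRingHom ℚ) -
      C ((1:ℚ)/2^(2*ℓ)) * ((X^2+X+1)^(2*k) * X^2)).map (Rat.castHom ℚ_[2]) with hG
  have hkey : C ((2:ℚ_[2])^(2*a)) * F.map PadicInt.Coe.ringHom =
      G.comp (C ((2:ℚ_[2])^m) * X) := by
    apply Polynomial.funext
    intro t
    rw [hG, hF]
    simp only [Polynomial.map_sub, Polynomial.map_sum, Polynomial.map_mul, Polynomial.map_pow,
      Polynomial.map_add, Polynomial.map_one, Polynomial.map_C, Polynomial.map_X,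
      Polynomial.map_map, eval_mul, eval_C, eval_comp, eval_X, eval_sub, eval_add, eval_pow,
      eval_one, eval_finset_sum]
    have hρ : ∀ r : ℤ, ((Rat.castHom ℚ_[2]).comp (Int.castRingHom ℚ)) r = (r : ℚ_[2]) := by
      intro r; simp
    have hlt : (Polynomial.map ((Rat.castHom ℚ_[2]).comp (Int.castRingHom ℚ)) f).natDegree
        < d + 1 := lt_of_le_of_lt Polynomial.natDegree_map_le (Nat.lt_succ_self d)
    rw [Polynomial.eval_eq_sum_range' hlt]
    simp only [Polynomial.coeff_map]
    have h2 : PadicInt.Coe.ringHom (2:ℤ_[2]) = (2:ℚ_[2]) := rfl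
    have hS : (2:ℚ_[2])^(2*a) * ∑ x ∈ Finset.range (d + 1), PadicInt.Coe.ringHom (e x) * t ^ x
        = ∑ x ∈ Finset.range (d + 1),
          ((Rat.castHom ℚ_[2]).comp (Int.castRingHom ℚ)) (f.coeff x) * (2 ^ m * t) ^ x := by
      rw [Finset.mul_sum]
      refine Finset.sum_congr rfl ?_
      intro j _
      rw [hρ]
      rcases j with _ | n
      · rw [he0]
        have h1 : PadicInt.Coe.ringHom ((s:ℤ_[2])) = ((s:ℚ_[2])) := PadicInt.coe_intCast s
        rw [h1, hc]
        push_cast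
        ring
      · rw [heS n, map_mul, map_pow]
        have h1 : PadicInt.Coe.ringHom ((f.coeff (n+1) : ℤ_[2])) = ((f.coeff (n+1) : ℚ_[2])) :=
          PadicInt.coe_intCast _
        rw [h1, h2]
        have h3 : (2:ℚ_[2])^(2*a) * 2^(m*(n+1) - 2*a) = 2^(m*(n+1)) := by
          rw [← pow_add]
          congr 1
          have hmm : m ≤ m*(n+1) := Nat.le_mul_of_pos_right m (Nat.succ_pos n)
          omega
        rw [mul_pow, ← pow_mul]
        linear_combination ((f.coeff (n+1) : ℚ_[2]) * t^(n+1)) * h3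
    rw [mul_sub, hS]
    have h4 : PadicInt.Coe.ringHom ((2:ℤ_[2])^(2*m)) = (2:ℚ_[2])^(2*m) := by rw [map_pow, h2]
    have h5 : PadicInt.Coe.ringHom ((2:ℤ_[2])^m) = (2:ℚ_[2])^m := by rw [map_pow, h2]
    have h6 : (Rat.castHom ℚ_[2]) ((1:ℚ)/2^(2*ℓ)) = (1:ℚ_[2])/2^(2*ℓ) := by
      rw [map_div₀, map_one, map_pow]
      norm_num
    rw [h4, h5, h6]
    have h7 : (2:ℚ_[2])^(2*ℓ) ≠ 0 := pow_ne_zero _ two_ne_zero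
    field_simp
    rw [hm]
    ring
  have hzev : (F.map PadicInt.Coe.ringHom).eval ((z:ℚ_[2])) = ((F.eval z : ℤ_[2]) : ℚ_[2]) := by
    rw [Polynomial.eval_map]
    exact Polynomial.eval₂_at_apply _ z
  have hGα : G.eval ((2:ℚ_[2])^m * (z:ℚ_[2])) = 0 := by
    have hev := congrArg (Polynomial.eval ((z:ℚ_[2]))) hkey
    simp only [eval_mul, eval_C, eval_comp, eval_X] at hev
    rw [hzev, hz0] at hev
    simpa using hev.symm
  have hkey' : C ((2:ℚ_[2])^(2*a)) * (F.derivative.map PadicInt.Coe.ringHom) =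
      C ((2:ℚ_[2])^m) * (G.derivative.comp (C ((2:ℚ_[2])^m) * X)) := by
    have hd2 := congrArg Polynomial.derivative hkey
    rw [Polynomial.derivative_C_mul, Polynomial.derivative_map, Polynomial.derivative_comp] at hd2
    rw [hd2]
    simp only [Polynomial.derivative_mul, Polynomial.derivative_C, Polynomial.derivative_X]
    ring
  have hz'ev : (F.derivative.map PadicInt.Coe.ringHom).eval ((z:ℚ_[2]))
      = ((F.derivative.eval z : ℤ_[2]) : ℚ_[2]) := by
    rw [Polynomial.eval_map]
    exact Polynomial.eval₂_at_apply _ z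
  have hG'α : G.derivative.eval ((2:ℚ_[2])^m * (z:ℚ_[2])) ≠ 0 := by
    have hev := congrArg (Polynomial.eval ((z:ℚ_[2]))) hkey'
    simp only [eval_mul, eval_C, eval_comp, eval_X] at hev
    rw [hz'ev] at hev
    intro h0
    rw [h0, mul_zero] at hev
    rcases mul_eq_zero.mp hev with h | h
    · exact (pow_ne_zero (2*a) (two_ne_zero)) h
    · have hne : ((F.derivative.eval z : ℤ_[2]) : ℚ_[2]) ≠ 0 := by
        simpa [PadicInt.coe_eq_zero] using hz3
      exact hne h
  exact ⟨(2:ℚ_[2])^m * (z:ℚ_[2]), hGα, hG'α⟩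

theorem deg_twice_odd_minus_power_not_sum_of_four_squares
    (f : Polynomial ℤ) (k : ℕ) (hdeg : f.natDegree = 2 * (2 * k + 1))
    (hsf : ∀ p : Polynomial ℤ, 0 < p.natDegree → ¬ p ^ 2 ∣ f)
    (hpos : ∀ t : ℝ, 0 < Polynomial.aeval t f)
    (hc : ∃ a b : ℕ, f.coeff 0 = 2 ^ (2 * a) * (8 * b + 1)) :
    ∃ ℓ₀ : ℕ, ∀ ℓ : ℕ, ℓ₀ ≤ ℓ →
      ¬ ∃ p₁ p₂ p₃ p₄ : Polynomial ℚ,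
        f.map (Int.castRingHom ℚ) -
            C ((1 : ℚ) / 2 ^ (2 * ℓ)) * ((X ^ 2 + X + 1) ^ (2 * k) * X ^ 2) =
          p₁ ^ 2 + p₂ ^ 2 + p₃ ^ 2 + p₄ ^ 2 := by
  obtain ⟨a, b, hc⟩ := hc
  refine ⟨a + 3, fun ℓ hℓ => ?_⟩
  rintro ⟨p₁, p₂, p₃, p₄, hsum⟩
  obtain ⟨α, hα0, hα1⟩ := hensel_root f a b k ℓ hℓ hc
  set ρ := Rat.castHom ℚ_[2] with hρ
  set G := (f.map (Int.castRingHom ℚ) -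
      C ((1:ℚ)/2^(2*ℓ)) * ((X^2+X+1)^(2*k) * X^2)).map ρ with hG
  have hGsum : G = (p₁.map ρ)^2 + (p₂.map ρ)^2 + (p₃.map ρ)^2 + (p₄.map ρ)^2 := by
    rw [hG, hsum]
    simp only [Polynomial.map_add, Polynomial.map_pow]
  have h0 : ((p₁.map ρ).eval α)^2 + ((p₂.map ρ).eval α)^2 + ((p₃.map ρ).eval α)^2
      + ((p₄.map ρ).eval α)^2 = 0 := by
    have hev := congrArg (Polynomial.eval α) hGsum
    rw [hα0] at hev
    simpa [eval_add, eval_pow] using hev.symm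
  obtain ⟨h1, h2, h3, h4⟩ := q2_aniso h0
  obtain ⟨q₁, hq₁⟩ := Polynomial.dvd_iff_isRoot.mpr h1
  obtain ⟨q₂, hq₂⟩ := Polynomial.dvd_iff_isRoot.mpr h2
  obtain ⟨q₃, hq₃⟩ := Polynomial.dvd_iff_isRoot.mpr h3
  obtain ⟨q₄, hq₄⟩ := Polynomial.dvd_iff_isRoot.mpr h4
  have hfac : G = (X - C α)^2 * (q₁^2 + q₂^2 + q₃^2 + q₄^2) := by
    rw [hGsum, hq₁, hq₂, hq₃, hq₄]
    ring
  apply hα1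
  rw [hfac]
  simp [Polynomial.derivative_mul, Polynomial.derivative_pow]
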